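/- Let m ≥ 0 be an integer and let f, g ∈ Harm_{2m} be harmonic homogeneous polynomials of degree 2m on ℝⁿ. Then ∫_{S^{n−1}} f·g dμ̄ = ( Π_{k=0}^{2m−1} (n+2k) )^{−1} · ⟨f,g⟩, where ⟨·,·⟩ is the differential pairing. -/

import Mathlib

noncomputable section

open MvPolynomial MeasureTheory Finset
open scoped RealInnerProductSpace Manifold

namespace Heat

abbrev Poly (n : ℕ) := MvPolynomial (Fin n) ℝ
abbrev E (n : ℕ) := EuclideanSpace ℝ (Fin n)

variable (n : ℕ)

/-- The differential operator `∂^I` on polynomials. -/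
def pdI (I : Fin n →₀ ℕ) : Poly n → Poly n :=
  (List.ofFn fun i : Fin n => (fun p : Poly n => (⇑(pderiv i))^[I i] p)).foldr (· ∘ ·) id

/-- The differential pairing `⟨g, f⟩ = (g(∂)f)(0)`. -/
def dPair (g f : Poly n) : ℝ :=
  eval 0 (∑ I ∈ g.support, g.coeff I • pdI n I f)

/-- The Laplacian `Δ = -∑ ∂ᵢ²` as a linear map on polynomials. -/
def lap : Poly n →ₗ[ℝ] Poly n :=
  -∑ i : Fin n, ((pderiv i : Derivation ℝ (Poly n) (Poly n)).toLinearMap ∘ₗ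
    (pderiv i : Derivation ℝ (Poly n) (Poly n)).toLinearMap)

/-- `r² = ∑ xᵢ²`. -/
def rsq : Poly n := ∑ i : Fin n, X i ^ 2

/-- Harmonic homogeneous polynomials of degree `m`. -/
def Harm (m : ℕ) : Submodule ℝ (Poly n) :=
  homogeneousSubmodule (Fin n) ℝ m ⊓ LinearMap.ker (lap n)

/-- `B` is an orthonormal basis of the subspace `S` w.r.t. the differential pairing. -/
structure IsONBasis (S : Submodule ℝ (Poly n)) (B : Finset (Poly n)) : Prop where
  mem : ∀ h ∈ B, h ∈ S
  ortho : ∀ h ∈ B, ∀ g ∈ B, dPair n h g = if h = g then 1 else 0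
  span : Submodule.span ℝ (B : Set (Poly n)) = S

/-- Evaluation of a polynomial at a point of Euclidean space. -/
def peval (f : Poly n) (x : E n) : ℝ := eval (fun i => x i) f

/-- `μ` is the rotation-invariant probability measure on the unit sphere `S^{n-1}`. -/
structure IsSphereMeasure (μ : Measure (E n)) : Prop where
  prob : IsProbabilityMeasure μ
  supp : μ (Metric.sphere (0 : E n) 1)ᶜ = 0
  inv : ∀ φ : E n ≃ₗᵢ[ℝ] E n, Measure.map φ μ = μ

/-- The lattice spanned (over `ℤ`) by the vectors `b`. -/
def latticeOf (b : Fin n → E n) : Submodule ℤ (E n) := Submodule.span ℤ (Set.range b)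

/-- An integral lattice: all square norms are integers. -/
def IsIntegral (L : Submodule ℤ (E n)) : Prop := ∀ v ∈ L, ∃ z : ℤ, ‖v‖ ^ 2 = (z : ℝ)

/-- The matrix `A` with `½A` the Gram matrix of the basis `b`. -/
def evenGram (b : Fin n → E n) : Matrix (Fin n) (Fin n) ℝ :=
  Matrix.of fun i j => 2 * ⟪b i, b j⟫

/-- A real matrix has integer entries and even diagonal. -/
def IntEvenDiag (M : Matrix (Fin n) (Fin n) ℝ) : Prop :=
  (∀ i j, ∃ z : ℤ, M i j = (z : ℝ)) ∧ ∀ i, ∃ z : ℤ, M i i = 2 * (z : ℝ)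

/-- `N` is the level of the lattice with basis `b`. -/
def IsLevel (b : Fin n → E n) (N : ℕ) : Prop :=
  0 < N ∧ IntEvenDiag n ((N : ℝ) • (evenGram n b)⁻¹) ∧
    ∀ M : ℕ, 0 < M → IntEvenDiag n ((M : ℝ) • (evenGram n b)⁻¹) → N ≤ M

/-- The spherical theta function `Θ_{h,Λ}`. -/
def theta (h : Poly n) (L : Submodule ℤ (E n)) (τ : UpperHalfPlane) : ℂ :=
  ∑' v : L, (peval n h (v : E n) : ℂ) *
    Complex.exp (2 * (Real.pi : ℂ) * Complex.I * ((‖(v : E n)‖ ^ 2 : ℝ) : ℂ) * (τ : ℂ))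

/-- The image of the lattice `L` under an isometry of Euclidean space. -/
def mapLat (φ : E n ≃ₗᵢ[ℝ] E n) (L : Submodule ℤ (E n)) : Submodule ℤ (E n) :=
  L.map (φ.toLinearEquiv.toLinearMap.restrictScalars ℤ)

/-- The Kronecker symbol at 2, `(a/2)`. -/
def kronAtTwo (a : ℤ) : ℤ :=
  if a % 2 = 0 then 0 else if a % 8 = 1 ∨ a % 8 = 7 then 1 else -1

/-- The Kronecker symbol `(a/m)`. -/
def kronSym (a m : ℤ) : ℤ :=
  if m = 0 then (if a = 1 ∨ a = -1 then 1 else 0)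
  else
    (if m < 0 ∧ a < 0 then -1 else 1) *
      kronAtTwo a ^ (m.natAbs.factorization 2) *
      jacobiSym a (m.natAbs / 2 ^ (m.natAbs.factorization 2))

open UpperHalfPlane in
/-- `f` is a modular form of weight `w`, level `N` and character `χ`:  it is holomorphic
on the upper half plane, transforms under `Γ₀(N)` with automorphy factor `χ(d)(cτ+d)^w`,
and is bounded towards all cusps. -/
structure IsModularForm (N : ℕ) (w : ℝ) (χ : ℤ → ℤ) (f : UpperHalfPlane → ℂ) : Prop where
  holo : MDifferentiable 𝓘(ℂ) 𝓘(ℂ) f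
  transf : ∀ γ : Matrix.SpecialLinearGroup (Fin 2) ℤ, γ ∈ CongruenceSubgroup.Gamma0 N →
    ∀ τ : UpperHalfPlane, f (γ • τ) =
      ((χ ((γ : Matrix (Fin 2) (Fin 2) ℤ) 1 1) : ℝ) : ℂ) *
      (((((γ : Matrix (Fin 2) (Fin 2) ℤ) 1 0 : ℤ) : ℂ)) * (τ : ℂ) +
        (((γ : Matrix (Fin 2) (Fin 2) ℤ) 1 1 : ℤ) : ℂ)) ^ (w : ℂ) * f τ
  bdd : ∀ γ : Matrix.SpecialLinearGroup (Fin 2) ℤ,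
    IsBoundedAtImInfty fun τ : UpperHalfPlane =>
      (((((γ : Matrix (Fin 2) (Fin 2) ℤ) 1 0 : ℤ) : ℂ)) * (τ : ℂ) +
        (((γ : Matrix (Fin 2) (Fin 2) ℤ) 1 1 : ℤ) : ℂ)) ^ (-(w : ℂ)) * f (γ • τ)

/-- The trivial character. -/
def trivChar : ℤ → ℤ := fun _ => 1

open scoped Classical in
/-- The multiple theta series `Θ_{m₁,…,m_k,Λ}` attached to a family of bases `B i`. -/
def thetaMulti (k : ℕ) (B : Fin k → Finset (Poly n)) (L : Submodule ℤ (E n))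
    (μ : Measure (E n)) (τ : UpperHalfPlane) : ℂ :=
  ∑ g ∈ Fintype.piFinset B,
    (∏ i, theta n (g i) L τ) * (((∫ x, ∏ i, peval n (g i) x ∂μ) : ℝ) : ℂ)

/-- The polynomial `p_m` (evaluated at `c`). -/
def pmVal (m : ℕ) (c : ℝ) : ℝ :=
  ∑ k ∈ Finset.range (m + 1),
    (-1 : ℝ) ^ k * c ^ (2 * m - 2 * k) /
      ((Nat.factorial (2 * m - 2 * k) : ℝ) * (Nat.factorial k : ℝ) * 2 ^ k *
        ∏ l ∈ Finset.range k, ((n : ℝ) + 4 * m - 4 - 2 * l))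

/-- The heat flux `f_Λ` of the lattice `L`. -/
def heatF (L : Submodule ℤ (E n)) (t : ℝ) (x : E n) : ℝ :=
  (4 * Real.pi * t) ^ (-(n : ℝ) / 2) * ∑' γ : L, Real.exp (-‖x - (γ : E n)‖ ^ 2 / (4 * t))

/-- Partial derivative of a function on Euclidean space. -/
def pdFun (i : Fin n) (F : E n → ℝ) : E n → ℝ := fun x => fderiv ℝ F x (EuclideanSpace.single i 1)

/-- Iterated partial derivative `∂^I` of a function on Euclidean space. -/
def pdIFun (I : Fin n →₀ ℕ) : (E n → ℝ) → (E n → ℝ) :=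
  (List.ofFn fun i : Fin n => (fun F : E n → ℝ => (pdFun n i)^[I i] F)).foldr (· ∘ ·) id

/-- The differential operator `g(∂)` applied to a smooth function. -/
def applyDiff (g : Poly n) (F : E n → ℝ) (x : E n) : ℝ :=
  ∑ I ∈ g.support, g.coeff I * pdIFun n I F x

open scoped Classical in
/-- The degree `2m` homogeneous term of the Taylor expansion of `x ↦ f_Λ(t,x)` at `0`. -/
def taylorTerm (L : Submodule ℤ (E n)) (m : ℕ) (t : ℝ) : Poly n :=
  ∑ c ∈ (Fintype.piFinset fun _ : Fin n => Finset.range (2 * m + 1)).filter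
      (fun c => ∑ i, c i = 2 * m),
    (pdIFun n (Finsupp.equivFunOnFinite.symm c) (heatF n L t) 0 /
      ∏ i, (Nat.factorial (c i) : ℝ)) • ∏ i, X i ^ c i

/-- `P` is the orthogonal projection of `A_m` onto `Harm_m` w.r.t. the differential
pairing: on `A_m` it takes values in `Harm_m`, `f - P f` is orthogonal to `Harm_m`,
and it is the identity on `Harm_m`. -/
def IsHarmProj (m : ℕ) (P : Poly n → Poly n) : Prop :=
  (∀ f ∈ homogeneousSubmodule (Fin n) ℝ m, P f ∈ Harm n m ∧
    ∀ h ∈ Harm n m, dPair n h (f - P f) = 0) ∧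
  ∀ h ∈ Harm n m, P h = h

/-- The `E₈` lattice as a subset of `ℝ⁸`. -/
def E8set : Set (E 8) :=
  {x | ((∀ i, ∃ z : ℤ, x i = (z : ℝ)) ∨ (∀ i, ∃ z : ℤ, x i = (z : ℝ) + 1 / 2)) ∧
    ∃ z : ℤ, (∑ i, x i) = 2 * (z : ℝ)}

end Heat

namespace Heat

variable (n : ℕ)

/-- The operator `P_{harm,m} = ∑_{k=0}^{⌊m/2⌋} r_{k,m} · r^{2k} Δ^k` on polynomials. -/
def PharmOp (m : ℕ) : Poly n → Poly n := fun f =>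
  ∑ k ∈ Finset.range (m / 2 + 1),
    (1 / ((2 : ℝ) ^ k * (Nat.factorial k : ℝ) *
      ∏ l ∈ Finset.range k, ((n : ℝ) + 2 * (m : ℝ) - 4 - 2 * (l : ℝ)))) •
      (rsq n ^ k * ((lap n ^ k) f))

/-- The quantity `Ξ(u,v,w)`. -/
def Xi (u v w : E n) : ℝ :=
  2 * ‖u‖ ^ 2 * ‖v‖ ^ 2 * ‖w‖ ^ 2 -
    (n : ℝ) * (‖u‖ ^ 2 * ⟪v, w⟫ ^ 2 + ‖v‖ ^ 2 * ⟪u, w⟫ ^ 2 + ‖w‖ ^ 2 * ⟪u, v⟫ ^ 2) +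
    (n : ℝ) ^ 2 * ⟪v, w⟫ * ⟪u, w⟫ * ⟪u, v⟫

/-- The `k`-th coefficient of the claimed q-expansion of `Θ_{m,m,Λ}`. -/
def mmCoeff (m : ℕ) (L : Submodule ℤ (E n)) (k : ℕ) : ℝ :=
  ∑' p : {p : L × L // (p.1 : E n) ≠ 0 ∧ (p.2 : E n) ≠ 0 ∧
      ‖(p.1 : E n)‖ ^ 2 + ‖(p.2 : E n)‖ ^ 2 = (k : ℝ)},
    pmVal n m (⟪(p.1.1 : E n), (p.1.2 : E n)⟫ / (‖(p.1.1 : E n)‖ * ‖(p.1.2 : E n)‖)) *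
      ‖(p.1.1 : E n)‖ ^ (2 * m) * ‖(p.1.2 : E n)‖ ^ (2 * m)

/-- The sum `∑ Ξ(u,v,w)` over lattice triples of total square norm `k`. -/
def tripleCoeff (L : Submodule ℤ (E n)) (k : ℕ) : ℝ :=
  ∑' t : {t : L × L × L //
      ‖(t.1 : E n)‖ ^ 2 + ‖(t.2.1 : E n)‖ ^ 2 + ‖(t.2.2 : E n)‖ ^ 2 = (k : ℝ)},
    Xi n (t.1.1 : E n) (t.1.2.1 : E n) (t.1.2.2 : E n)

/-- The generalized binomial coefficient `C(z,k) = z(z-1)⋯(z-k+1)/k!`. -/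
def genBinom (z : ℝ) (k : ℕ) : ℝ :=
  (∏ a ∈ Finset.range k, (z - (a : ℝ))) / (Nat.factorial k : ℝ)

open scoped Classical in
/-- The monomial orthonormal basis `{xᵢ²/√2} ∪ {xᵢxⱼ, i<j}` of `A₂`. -/
def B2 : Finset (Poly n) :=
  (Finset.univ.image fun i : Fin n => (Real.sqrt 2)⁻¹ • (X i ^ 2 : Poly n)) ∪
  ((Finset.univ.filter fun p : Fin n × Fin n => p.1 < p.2).image
    fun p => (X p.1 * X p.2 : Poly n))

/-- The explicit harmonic projection in degree two, `P = id + (1/(2n)) r² Δ`. -/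
def P2 : Poly n → Poly n := fun g => g + (1 / (2 * (n : ℝ))) • (rsq n * lap n g)

end Heat
namespace Heat


section Aux

open Finsupp MvPolynomial

variable {n : ℕ}

/-- product of factorials of a multi-index -/
noncomputable def Nfac {n : ℕ} (γ : Fin n →₀ ℕ) : ℝ := ∏ i, ((γ i).factorial : ℝ)

/-- the algebraic (Fischer) pairing -/
noncomputable def Dp {n : ℕ} (g f : Poly n) : ℝ :=
  ∑ γ ∈ g.support, Nfac γ * g.coeff γ * f.coeff γ

lemma Dp_eq_sum_superset {g f : Poly n} {s : Finset (Fin n →₀ ℕ)} (hs : g.support ⊆ s) :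
    Dp g f = ∑ γ ∈ s, Nfac γ * g.coeff γ * f.coeff γ :=
  Finset.sum_subset hs (fun γ _ hγ => by
    rw [MvPolynomial.notMem_support_iff] at hγ; rw [hγ]; ring)

lemma Dp_symm (g f : Poly n) : Dp g f = Dp f g := by
  rw [Dp_eq_sum_superset (Finset.subset_union_left : g.support ⊆ g.support ∪ f.support),
    Dp_eq_sum_superset (Finset.subset_union_right : f.support ⊆ g.support ∪ f.support)]
  exact Finset.sum_congr rfl fun γ _ => by ring

lemma Dp_add_right (g f₁ f₂ : Poly n) : Dp g (f₁ + f₂) = Dp g f₁ + Dp g f₂ := by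
  unfold Dp
  rw [← Finset.sum_add_distrib]
  exact Finset.sum_congr rfl fun γ _ => by rw [MvPolynomial.coeff_add]; ring

lemma Dp_add_left (g₁ g₂ f : Poly n) : Dp (g₁ + g₂) f = Dp g₁ f + Dp g₂ f := by
  rw [Dp_symm, Dp_add_right, Dp_symm f g₁, Dp_symm f g₂]

lemma Dp_zero_left (f : Poly n) : Dp 0 f = 0 := by
  unfold Dp
  simp

lemma Dp_sum_left {ι : Type*} (s : Finset ι) (h : ι → Poly n) (f : Poly n) :
    Dp (∑ i ∈ s, h i) f = ∑ i ∈ s, Dp (h i) f := by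
  induction s using Finset.cons_induction with
  | empty => simpa using Dp_zero_left f
  | cons a s ha ih => rw [Finset.sum_cons, Dp_add_left, ih, Finset.sum_cons]

lemma Dp_sum_right {ι : Type*} (s : Finset ι) (h : ι → Poly n) (g : Poly n) :
    Dp g (∑ i ∈ s, h i) = ∑ i ∈ s, Dp g (h i) := by
  rw [Dp_symm, Dp_sum_left]
  exact Finset.sum_congr rfl fun i _ => Dp_symm _ _

lemma Dp_smul_left (c : ℝ) (g f : Poly n) : Dp (c • g) f = c * Dp g f := by
  rw [Dp_eq_sum_superset (MvPolynomial.support_smul : (c • g).support ⊆ g.support)]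
  unfold Dp
  rw [Finset.mul_sum]
  exact Finset.sum_congr rfl fun γ _ => by
    rw [MvPolynomial.coeff_smul]; simp only [smul_eq_mul]; ring

lemma Dp_smul_right (c : ℝ) (g f : Poly n) : Dp g (c • f) = c * Dp g f := by
  rw [Dp_symm, Dp_smul_left, Dp_symm]

lemma coeff_pderiv (i : Fin n) (f : Poly n) (δ : Fin n →₀ ℕ) :
    (pderiv i f).coeff δ = ((δ i : ℝ) + 1) * f.coeff (δ + Finsupp.single i 1) := by
  induction f using MvPolynomial.induction_on' with
  | add p q hp hq =>
    rw [map_add, MvPolynomial.coeff_add, MvPolynomial.coeff_add, hp, hq]; ring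
  | monomial J c =>
    rw [pderiv_monomial, MvPolynomial.coeff_monomial, MvPolynomial.coeff_monomial]
    by_cases hJ : J = δ + Finsupp.single i 1
    · subst hJ
      rw [if_pos (add_tsub_cancel_right _ _), if_pos rfl]
      have : ((δ + Finsupp.single i 1 : Fin n →₀ ℕ)) i = δ i + 1 := by
        simp [Finsupp.add_apply]
      rw [this]
      push_cast
      ring
    · rw [if_neg hJ, mul_zero]
      by_cases hJi : J i = 0
      · by_cases h2 : J - Finsupp.single i 1 = δ
        · rw [if_pos h2, hJi]; simp
        · rw [if_neg h2]
      · have h2 : J - Finsupp.single i 1 ≠ δ := by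
          intro h
          apply hJ
          ext j
          have hj : J j - (Finsupp.single i 1) j = δ j := by
            rw [← Finsupp.tsub_apply, h]
          rw [Finsupp.add_apply]
          rcases eq_or_ne i j with rfl | hij
          · rw [Finsupp.single_eq_same] at hj ⊢
            omega
          · rw [Finsupp.single_eq_of_ne' hij] at hj ⊢
            omega
        rw [if_neg h2]

lemma pderiv_pderiv_comm (i j : Fin n) (f : Poly n) :
    pderiv i (pderiv j f) = pderiv j (pderiv i f) := by
  ext δ
  rw [coeff_pderiv, coeff_pderiv, coeff_pderiv, coeff_pderiv]
  rcases eq_or_ne i j with rfl | hij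
  · rfl
  · have h1 : ((δ + Finsupp.single i 1 : Fin n →₀ ℕ)) j = δ j := by
      rw [Finsupp.add_apply, Finsupp.single_eq_of_ne' hij, add_zero]
    have h2 : ((δ + Finsupp.single j 1 : Fin n →₀ ℕ)) i = δ i := by
      rw [Finsupp.add_apply, Finsupp.single_eq_of_ne' hij.symm, add_zero]
    rw [h1, h2, add_right_comm δ (Finsupp.single i 1) (Finsupp.single j 1)]
    ring

lemma isHomog_iff {f : Poly n} {d : ℕ} :
    f.IsHomogeneous d ↔ ∀ γ, f.coeff γ ≠ 0 → ∑ i, γ i = d := by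
  have key : ∀ γ : Fin n →₀ ℕ, (Finsupp.weight 1) γ = ∑ i, γ i := by
    intro γ
    rw [Finsupp.weight_apply, Finsupp.sum]
    rw [Finset.sum_subset (Finset.subset_univ _)]
    · exact Finset.sum_congr rfl fun i _ => by simp
    · intro i _ hi
      rw [Finsupp.notMem_support_iff] at hi
      simp [hi]
  constructor
  · intro h γ hγ
    rw [← key]
    exact h hγ
  · intro h γ hγ
    rw [key]
    exact h γ hγ

lemma homog_pderiv {f : Poly n} {d : ℕ} {i : Fin n} (hf : f.IsHomogeneous (d + 1)) :
    (pderiv i f).IsHomogeneous d := by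
  rw [isHomog_iff] at hf ⊢
  intro γ hγ
  rw [coeff_pderiv] at hγ
  have h2 : f.coeff (γ + Finsupp.single i 1) ≠ 0 := by
    intro h; rw [h, mul_zero] at hγ; exact hγ rfl
  have h3 := hf _ h2
  have h4 : ∑ j, ((γ + Finsupp.single i 1 : Fin n →₀ ℕ)) j = (∑ j, γ j) + 1 := by
    simp only [Finsupp.add_apply]
    rw [Finset.sum_add_distrib]
    congr 1
    simp [Finsupp.single_apply]
  omega

lemma euler {f : Poly n} {d : ℕ} (hf : f.IsHomogeneous d) :
    ∑ i, X i * pderiv i f = (d : ℝ) • f := by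
  ext γ
  rw [MvPolynomial.coeff_smul, MvPolynomial.coeff_sum]
  have key : ∀ i, (X i * pderiv i f).coeff γ = (γ i : ℝ) * f.coeff γ := by
    intro i
    rw [MvPolynomial.coeff_X_mul']
    by_cases hi : i ∈ γ.support
    · rw [if_pos hi, coeff_pderiv]
      have h1 : 1 ≤ γ i := by
        rw [Finsupp.mem_support_iff] at hi; omega
      have h2 : ((γ - Finsupp.single i 1 : Fin n →₀ ℕ)) i = γ i - 1 := by
        rw [Finsupp.tsub_apply, Finsupp.single_eq_same]
      have h3 : γ - Finsupp.single i 1 + Finsupp.single i 1 = γ := by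
        rw [tsub_add_cancel_of_le]
        rwa [Finsupp.single_le_iff]
      rw [h2, h3]
      congr 1
      push_cast [Nat.cast_sub h1]
      ring
    · rw [if_neg hi]
      rw [Finsupp.notMem_support_iff] at hi
      rw [hi]
      simp
  rw [Finset.sum_congr rfl fun i _ => key i, ← Finset.sum_mul]
  by_cases hγ : f.coeff γ = 0
  · rw [hγ]; simp
  · rw [isHomog_iff] at hf
    rw [← Nat.cast_sum, hf γ hγ]
    simp [smul_eq_mul]

lemma Nfac_single_add (i : Fin n) (δ : Fin n →₀ ℕ) :
    Nfac (Finsupp.single i 1 + δ) = ((δ i : ℝ) + 1) * Nfac δ := by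
  unfold Nfac
  rw [← Finset.mul_prod_erase Finset.univ _ (Finset.mem_univ i),
      ← Finset.mul_prod_erase Finset.univ (fun j => ((δ j).factorial : ℝ)) (Finset.mem_univ i)]
  have h1 : ((Finsupp.single i 1 + δ : Fin n →₀ ℕ)) i = δ i + 1 := by
    rw [Finsupp.add_apply, Finsupp.single_eq_same, add_comm]
  have h2 : ∀ j ∈ Finset.univ.erase i,
      ((((Finsupp.single i 1 + δ : Fin n →₀ ℕ)) j).factorial : ℝ) = ((δ j).factorial : ℝ) := by
    intro j hj
    rw [Finsupp.add_apply, Finsupp.single_eq_of_ne' (Finset.mem_erase.mp hj).1.symm, zero_add]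
  rw [h1, Nat.factorial_succ, Finset.prod_congr rfl h2]
  push_cast
  ring

lemma Dp_X_mul (i : Fin n) (g f : Poly n) : Dp (X i * g) f = Dp g (pderiv i f) := by
  have hsub : (X i * g).support ⊆
      g.support.map (addLeftEmbedding (Finsupp.single i 1)) := by
    intro γ hγ
    rw [MvPolynomial.mem_support_iff, MvPolynomial.coeff_X_mul'] at hγ
    by_cases hi : i ∈ γ.support
    · rw [if_pos hi] at hγ
      rw [Finset.mem_map]
      refine ⟨γ - Finsupp.single i 1, MvPolynomial.mem_support_iff.mpr hγ, ?_⟩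
      show Finsupp.single i 1 + (γ - Finsupp.single i 1) = γ
      rw [add_comm, tsub_add_cancel_of_le]
      rw [Finsupp.single_le_iff]
      rw [Finsupp.mem_support_iff] at hi
      omega
    · rw [if_neg hi] at hγ
      exact absurd rfl hγ
  rw [Dp_eq_sum_superset hsub, Finset.sum_map]
  unfold Dp
  refine Finset.sum_congr rfl fun δ hδ => ?_
  have he : ∀ x, addLeftEmbedding (Finsupp.single i 1) x = Finsupp.single i 1 + x :=
    fun x => rfl
  rw [he, Nfac_single_add, MvPolynomial.coeff_X_mul, coeff_pderiv, add_comm (Finsupp.single i 1) δ]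
  ring

lemma sum_Dp_pderiv {f : Poly n} {d : ℕ} (hf : f.IsHomogeneous d) (g : Poly n) :
    ∑ i, Dp (pderiv i f) (pderiv i g) = (d : ℝ) * Dp f g := by
  have key : ∀ i : Fin n, Dp (pderiv i f) (pderiv i g) = Dp (X i * pderiv i f) g :=
    fun i => (Dp_X_mul i (pderiv i f) g).symm
  rw [Finset.sum_congr rfl fun i _ => key i, ← Dp_sum_left, euler hf, Dp_smul_left]

lemma rsq_mul_eq (q : Poly n) : rsq n * q = ∑ i, X i * (X i * q) := by
  rw [rsq, Finset.sum_mul]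
  exact Finset.sum_congr rfl fun i _ => by ring

lemma Dp_rsq_mul (q p : Poly n) :
    Dp (rsq n * q) p = ∑ i, Dp q (pderiv i (pderiv i p)) := by
  rw [rsq_mul_eq, Dp_sum_left]
  exact Finset.sum_congr rfl fun i _ => by rw [Dp_X_mul, Dp_X_mul]

lemma pderiv_rsq (i : Fin n) : pderiv i (rsq n) = 2 * X i := by
  rw [rsq, map_sum]
  rw [Finset.sum_eq_single i]
  · rw [sq, pderiv_mul, pderiv_X_self]; ring
  · intro j _ hj
    rw [sq, pderiv_mul, pderiv_X]
    simp [Pi.single_eq_of_ne hj]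
  · intro h
    exact absurd (Finset.mem_univ i) h

lemma pderiv_rsq_pow (i : Fin n) (k : ℕ) :
    pderiv i (rsq n ^ (k + 1)) = ((2 : ℝ) * ((k : ℝ) + 1)) • (rsq n ^ k * X i) := by
  rw [Derivation.leibniz_pow, pderiv_rsq, Nat.add_sub_cancel]
  rw [smul_eq_mul, ← Nat.cast_smul_eq_nsmul ℝ]
  have h2 : rsq n ^ k * (2 * X i) = (2 : ℝ) • (rsq n ^ k * X i) := by
    rw [MvPolynomial.smul_eq_C_mul, (by simpa using map_ofNat (MvPolynomial.C : ℝ →+* Poly n) 2 : (MvPolynomial.C (2:ℝ) : Poly n) = 2)]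
    ring
  rw [h2, smul_smul]
  push_cast
  ring_nf

lemma sum_pderiv_rsq_pow_mul_X (d : ℕ) :
    ∑ i, pderiv i (rsq n ^ d) * X i = ((2 : ℝ) * (d : ℝ)) • rsq n ^ d := by
  cases d with
  | zero => simp
  | succ e =>
    have key : ∀ i : Fin n, pderiv i (rsq n ^ (e + 1)) * X i =
        ((2 : ℝ) * ((e : ℝ) + 1)) • (rsq n ^ e * (X i * X i)) := by
      intro i
      rw [pderiv_rsq_pow, smul_mul_assoc, mul_assoc]
    rw [Finset.sum_congr rfl fun i _ => key i, ← Finset.smul_sum, ← Finset.mul_sum]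
    have h2 : ∑ i, (X i * X i : Poly n) = rsq n := by
      rw [rsq]
      exact Finset.sum_congr rfl fun i _ => (sq (X i)).symm
    rw [h2, ← pow_succ]
    congr 1
    push_cast
    ring

lemma sum_pderiv_pderiv_rsq_pow (d : ℕ) :
    ∑ i, pderiv i (pderiv i ((rsq n) ^ (d + 1))) =
      ((2 * ((d : ℝ) + 1) * ((n : ℝ) + 2 * (d : ℝ)))) • (rsq n) ^ d := by
  have key : ∀ i : Fin n, pderiv i (pderiv i (rsq n ^ (d + 1))) =
      ((2 : ℝ) * ((d : ℝ) + 1)) • (pderiv i (rsq n ^ d) * X i + rsq n ^ d) := by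
    intro i
    rw [pderiv_rsq_pow, Derivation.map_smul, pderiv_mul, pderiv_X_self, mul_one]
  rw [Finset.sum_congr rfl fun i _ => key i, ← Finset.smul_sum, Finset.sum_add_distrib,
    sum_pderiv_rsq_pow_mul_X, Finset.sum_const, Finset.card_univ, Fintype.card_fin]
  rw [← Nat.cast_smul_eq_nsmul ℝ, ← add_smul, smul_smul]
  congr 1
  ring

lemma support_subset_of_homog_zero {f : Poly n} (hf : f.IsHomogeneous 0) :
    f.support ⊆ {0} := by
  intro γ hγ
  rw [MvPolynomial.mem_support_iff] at hγ
  rw [isHomog_iff] at hf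
  have h1 := hf γ hγ
  rw [Finset.mem_singleton]
  ext j
  have h2 := (Finset.sum_eq_zero_iff).mp h1 j (Finset.mem_univ j)
  simpa using h2

lemma Nfac_zero : Nfac (0 : Fin n →₀ ℕ) = 1 := by
  unfold Nfac
  simp

lemma Dp_one_one_aux (f g : Poly n) (hf : f.IsHomogeneous 0) (hg : g.IsHomogeneous 0) :
    Dp (1 : Poly n) (f * g) = Dp f g := by
  have hone : (1 : Poly n).support ⊆ {0} := by
    intro γ hγ
    rw [MvPolynomial.mem_support_iff, MvPolynomial.coeff_one] at hγ
    rw [Finset.mem_singleton]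
    by_contra hne
    rw [if_neg (Ne.symm hne)] at hγ
    exact hγ rfl
  rw [Dp_eq_sum_superset hone, Dp_eq_sum_superset (support_subset_of_homog_zero hf),
    Finset.sum_singleton, Finset.sum_singleton, Nfac_zero, MvPolynomial.coeff_one, if_pos rfl]
  have : (f * g).coeff 0 = f.coeff 0 * g.coeff 0 := by
    simp [← MvPolynomial.constantCoeff_eq, map_mul]
  rw [this]
  ring

lemma Dp_one_one : Dp (1 : Poly n) (1 : Poly n) = 1 := by
  have hone : (1 : Poly n).support ⊆ {0} := by
    intro γ hγ
    rw [MvPolynomial.mem_support_iff, MvPolynomial.coeff_one] at hγ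
    rw [Finset.mem_singleton]
    by_contra hne
    rw [if_neg (Ne.symm hne)] at hγ
    exact hγ rfl
  rw [Dp_eq_sum_superset hone, Finset.sum_singleton, Nfac_zero, MvPolynomial.coeff_one, if_pos rfl]
  ring

lemma Dp_rsq_pow (d : ℕ) :
    Dp ((rsq n) ^ d) ((rsq n) ^ d) =
      2 ^ d * (d.factorial : ℝ) * ∏ k ∈ Finset.range d, ((n : ℝ) + 2 * (k : ℝ)) := by
  induction d with
  | zero => simpa using Dp_one_one
  | succ d ih =>
    have step : Dp (rsq n ^ (d + 1)) (rsq n ^ (d + 1)) =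
        (2 * ((d : ℝ) + 1) * ((n : ℝ) + 2 * (d : ℝ))) * Dp (rsq n ^ d) (rsq n ^ d) := by
      nth_rewrite 1 [pow_succ']
      rw [Dp_rsq_mul, ← Dp_sum_right, sum_pderiv_pderiv_rsq_pow, Dp_smul_right]
    rw [step, ih, Finset.prod_range_succ, Nat.factorial_succ]
    push_cast
    ring

lemma hecke : ∀ d : ℕ, ∀ f g : Poly n, f.IsHomogeneous d → g.IsHomogeneous d →
    (∑ i, pderiv i (pderiv i f)) = 0 → (∑ i, pderiv i (pderiv i g)) = 0 →
    Dp ((rsq n) ^ d) (f * g) = 2 ^ d * (d.factorial : ℝ) * Dp f g := by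
  intro d
  induction d with
  | zero =>
    intro f g hf hg _ _
    rw [pow_zero, Dp_one_one_aux f g hf hg]
    norm_num
  | succ d ih =>
    intro f g hf hg hlf hlg
    have hkey : ∑ i, pderiv i (pderiv i (f * g)) =
        (2 : ℝ) • ∑ i, pderiv i f * pderiv i g := by
      have expand : ∀ i : Fin n, pderiv i (pderiv i (f * g)) =
          pderiv i (pderiv i f) * g + pderiv i f * pderiv i g +
            (pderiv i f * pderiv i g + f * pderiv i (pderiv i g)) := by
        intro i
        rw [pderiv_mul, map_add, pderiv_mul, pderiv_mul]
      rw [Finset.sum_congr rfl fun i _ => expand i]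
      rw [Finset.sum_add_distrib, Finset.sum_add_distrib, Finset.sum_add_distrib]
      rw [← Finset.sum_mul, ← Finset.mul_sum, hlf, hlg, zero_mul, mul_zero, zero_add, add_zero]
      rw [two_smul]
    have harm_pd : ∀ (p : Poly n), (∑ i, pderiv i (pderiv i p)) = 0 →
        ∀ j : Fin n, (∑ i, pderiv i (pderiv i (pderiv j p))) = 0 := by
      intro p hp j
      have : ∀ i : Fin n, pderiv i (pderiv i (pderiv j p)) =
          pderiv j (pderiv i (pderiv i p)) := by
        intro i
        rw [pderiv_pderiv_comm i j p, pderiv_pderiv_comm i j (pderiv i p)]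
      rw [Finset.sum_congr rfl fun i _ => this i, ← map_sum, hp, map_zero]
    calc Dp (rsq n ^ (d + 1)) (f * g)
        = Dp (rsq n * rsq n ^ d) (f * g) := by rw [pow_succ']
      _ = ∑ i, Dp (rsq n ^ d) (pderiv i (pderiv i (f * g))) := Dp_rsq_mul _ _
      _ = Dp (rsq n ^ d) ((2:ℝ) • ∑ i, pderiv i f * pderiv i g) := by
          rw [← Dp_sum_right, hkey]
      _ = 2 * ∑ i, Dp (rsq n ^ d) (pderiv i f * pderiv i g) := by
          rw [Dp_smul_right, Dp_sum_right]
      _ = 2 * ∑ i, 2 ^ d * (d.factorial : ℝ) * Dp (pderiv i f) (pderiv i g) := by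
          congr 1
          refine Finset.sum_congr rfl fun i _ => ?_
          exact ih (pderiv i f) (pderiv i g) (homog_pderiv hf) (homog_pderiv hg)
            (harm_pd f hlf i) (harm_pd g hlg i)
      _ = 2 * (2 ^ d * (d.factorial : ℝ)) * ∑ i, Dp (pderiv i f) (pderiv i g) := by
          rw [← Finset.mul_sum]; ring
      _ = 2 * (2 ^ d * (d.factorial : ℝ)) * (((d : ℝ) + 1) * Dp f g) := by
          rw [sum_Dp_pderiv hf g]
          push_cast
          ring_nf
      _ = 2 ^ (d + 1) * ((d + 1).factorial : ℝ) * Dp f g := by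
          rw [Nat.factorial_succ]
          push_cast
          ring

lemma pderiv_iterate_monomial (i : Fin n) (k : ℕ) (J : Fin n →₀ ℕ) (c : ℝ) :
    (⇑(pderiv i))^[k] (monomial J c) =
      monomial (J - Finsupp.single i k) (c * ((J i).descFactorial k : ℝ)) := by
  induction k with
  | zero => simp
  | succ k ih =>
    rw [Function.iterate_succ_apply', ih, pderiv_monomial]
    have h1 : J - Finsupp.single i k - Finsupp.single i 1 = J - Finsupp.single i (k + 1) := by
      rw [tsub_tsub, ← Finsupp.single_add]
    have h2 : ((J - Finsupp.single i k : Fin n →₀ ℕ)) i = J i - k := by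
      rw [Finsupp.tsub_apply, Finsupp.single_eq_same]
    rw [h1, h2, Nat.descFactorial_succ]
    congr 1
    rw [Nat.cast_mul]
    ring

lemma foldr_pdI_monomial (I : Fin n →₀ ℕ) :
    ∀ (l : List (Fin n)), l.Nodup → ∀ (J : Fin n →₀ ℕ) (c : ℝ),
    ((l.map fun i : Fin n => (fun p : Poly n => (⇑(pderiv i))^[I i] p)).foldr (· ∘ ·) id)
        (monomial J c) =
      monomial (J - ∑ i ∈ l.toFinset, Finsupp.single i (I i))
        (c * ∏ i ∈ l.toFinset, ((J i).descFactorial (I i) : ℝ)) := by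
  intro l
  induction l with
  | nil => intro _ J c; simp
  | cons a l ih =>
    intro hnd J c
    have hal : a ∉ l := (List.nodup_cons.mp hnd).1
    have hnd' : l.Nodup := (List.nodup_cons.mp hnd).2
    rw [List.map_cons, List.foldr_cons]
    have happ : ∀ p : Poly n,
        ((· ∘ ·) (fun p : Poly n => (⇑(pderiv a))^[I a] p)
          ((l.map fun i : Fin n => (fun p : Poly n => (⇑(pderiv i))^[I i] p)).foldr (· ∘ ·) id)) p
        = (⇑(pderiv a))^[I a]
            (((l.map fun i : Fin n => (fun p : Poly n => (⇑(pderiv i))^[I i] p)).foldr (· ∘ ·) id) p) :=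
      fun p => rfl
    simp only [Function.comp_apply]
    rw [ih hnd', pderiv_iterate_monomial]
    have hS : ((J - ∑ i ∈ l.toFinset, Finsupp.single i (I i) : Fin n →₀ ℕ)) a = J a := by
      rw [Finsupp.tsub_apply]
      have : (∑ i ∈ l.toFinset, Finsupp.single i (I i) : Fin n →₀ ℕ) a = 0 := by
        rw [Finsupp.finset_sum_apply]
        refine Finset.sum_eq_zero fun i hi => ?_
        rw [Finsupp.single_eq_of_ne]
        intro he
        subst he
        exact hal (List.mem_toFinset.mp hi)
      rw [this, Nat.sub_zero]
    have htf : (a :: l).toFinset = insert a l.toFinset := by simp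
    have hanotin : a ∉ l.toFinset := fun h => hal (List.mem_toFinset.mp h)
    rw [hS, htf, Finset.sum_insert hanotin, Finset.prod_insert hanotin, tsub_tsub]
    rw [add_comm (Finsupp.single a (I a))]
    congr 1
    ring

lemma pdI_monomial (I : Fin n →₀ ℕ) (J : Fin n →₀ ℕ) (c : ℝ) :
    pdI n I (monomial J c) =
      monomial (J - I) (c * ∏ i, ((J i).descFactorial (I i) : ℝ)) := by
  rw [pdI, List.ofFn_eq_map]
  rw [foldr_pdI_monomial I (List.finRange n) (List.nodup_finRange n)]
  have h1 : (List.finRange n).toFinset = Finset.univ := by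
    ext i; simp [List.mem_finRange]
  rw [h1]
  have h2 : (∑ i ∈ Finset.univ, Finsupp.single i (I i) : Fin n →₀ ℕ) = I := by
    ext j
    rw [Finsupp.finset_sum_apply]
    rw [Finset.sum_eq_single j (fun i _ hi => Finsupp.single_eq_of_ne' hi) (fun h => absurd (Finset.mem_univ j) h)]
    exact Finsupp.single_eq_same
  rw [h2]

lemma foldr_pdI_add (I : Fin n →₀ ℕ) (l : List (Fin n)) (p q : Poly n) :
    ((l.map fun i : Fin n => (fun p : Poly n => (⇑(pderiv i))^[I i] p)).foldr (· ∘ ·) id) (p + q)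
      = ((l.map fun i : Fin n => (fun p : Poly n => (⇑(pderiv i))^[I i] p)).foldr (· ∘ ·) id) p
        + ((l.map fun i : Fin n => (fun p : Poly n => (⇑(pderiv i))^[I i] p)).foldr (· ∘ ·) id) q := by
  have iter_add : ∀ (i : Fin n) (k : ℕ) (p q : Poly n),
      (⇑(pderiv i))^[k] (p + q) = (⇑(pderiv i))^[k] p + (⇑(pderiv i))^[k] q := by
    intro i k
    induction k with
    | zero => intro p q; simp
    | succ k ih =>
      intro p q
      rw [Function.iterate_succ_apply', Function.iterate_succ_apply',
        Function.iterate_succ_apply', ih, map_add]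
  induction l with
  | nil => simp
  | cons a l ih =>
    rw [List.map_cons, List.foldr_cons]
    show (⇑(pderiv a))^[I a] _ = (⇑(pderiv a))^[I a] _ + (⇑(pderiv a))^[I a] _
    rw [ih, iter_add]

lemma foldr_pdI_zero (I : Fin n →₀ ℕ) (l : List (Fin n)) :
    ((l.map fun i : Fin n => (fun p : Poly n => (⇑(pderiv i))^[I i] p)).foldr (· ∘ ·) id)
      (0 : Poly n) = 0 := by
  have iter_zero : ∀ (i : Fin n) (k : ℕ), (⇑(pderiv i))^[k] (0 : Poly n) = 0 := by
    intro i k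
    induction k with
    | zero => simp
    | succ k ih => rw [Function.iterate_succ_apply', ih, map_zero]
  induction l with
  | nil => simp
  | cons a l ih =>
    rw [List.map_cons, List.foldr_cons]
    show (⇑(pderiv a))^[I a] _ = 0
    rw [ih, iter_zero]

lemma pdI_add (I : Fin n →₀ ℕ) (p q : Poly n) :
    pdI n I (p + q) = pdI n I p + pdI n I q := by
  rw [pdI, List.ofFn_eq_map]
  exact foldr_pdI_add I _ p q

lemma pdI_sum (I : Fin n →₀ ℕ) {ι : Type*} (s : Finset ι) (h : ι → Poly n) :
    pdI n I (∑ j ∈ s, h j) = ∑ j ∈ s, pdI n I (h j) := by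
  induction s using Finset.cons_induction with
  | empty =>
    simp only [Finset.sum_empty]
    rw [pdI, List.ofFn_eq_map]
    exact foldr_pdI_zero I _
  | cons a s ha ih => rw [Finset.sum_cons, pdI_add, ih, Finset.sum_cons]

lemma eval_zero_monomial (K : Fin n →₀ ℕ) (c : ℝ) :
    eval (0 : Fin n → ℝ) (monomial K c) = if K = 0 then c else 0 := by
  rw [MvPolynomial.eval_monomial]
  simp only [Pi.zero_apply]
  by_cases hK : K = 0
  · subst hK; simp
  · rw [if_neg hK]
    obtain ⟨i, hi⟩ : ∃ i, K i ≠ 0 := by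
      by_contra h
      push_neg at h
      exact hK (Finsupp.ext h)
    have : (K.prod fun (nn : Fin n) (e : ℕ) => (0 : ℝ) ^ e) = 0 := by
      rw [Finsupp.prod]
      apply Finset.prod_eq_zero (Finsupp.mem_support_iff.mpr hi)
      exact zero_pow hi
    rw [this, mul_zero]

lemma eval_zero_pdI (I : Fin n →₀ ℕ) (f : Poly n) :
    eval (0 : Fin n → ℝ) (pdI n I f) = Nfac I * f.coeff I := by
  conv_lhs => rw [f.as_sum, pdI_sum]
  rw [map_sum]
  have key : ∀ J ∈ f.support,
      eval (0 : Fin n → ℝ) (pdI n I (monomial J (f.coeff J)))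
        = if J = I then Nfac I * f.coeff I else 0 := by
    intro J _
    rw [pdI_monomial, eval_zero_monomial]
    by_cases hJ : J = I
    · subst hJ
      rw [if_pos (tsub_self J), if_pos rfl]
      have : ∀ i : Fin n, ((J i).descFactorial (J i) : ℝ) = ((J i).factorial : ℝ) := by
        intro i; rw [Nat.descFactorial_self]
      rw [Finset.prod_congr rfl fun i _ => this i]
      rw [Nfac]
      ring
    · rw [if_neg hJ]
      by_cases hle : J - I = 0
      · rw [if_pos hle]
        obtain ⟨i, hi⟩ : ∃ i, J i < I i := by
          by_contra h
          push_neg at h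
          apply hJ
          ext j
          have h1 : J j - I j = 0 := by
            rw [← Finsupp.tsub_apply, hle]; rfl
          have h2 := h j
          omega
        have : ((J i).descFactorial (I i) : ℝ) = 0 := by
          rw [Nat.descFactorial_eq_zero_iff_lt.mpr hi, Nat.cast_zero]
        rw [Finset.prod_eq_zero (Finset.mem_univ i) this, mul_zero]
      · rw [if_neg hle]
  rw [Finset.sum_congr rfl key, Finset.sum_ite_eq' f.support I _]
  by_cases hI : I ∈ f.support
  · rw [if_pos hI]
  · rw [if_neg hI, MvPolynomial.notMem_support_iff.mp hI, mul_zero]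

lemma dPair_eq_Dp (g f : Poly n) : dPair n g f = Dp g f := by
  rw [dPair, map_sum]
  unfold Dp
  refine Finset.sum_congr rfl fun I _ => ?_
  rw [MvPolynomial.smul_eq_C_mul, map_mul, MvPolynomial.eval_C, eval_zero_pdI]
  ring

end Aux

section MeasureAux

open MeasureTheory Finsupp MvPolynomial

variable {n : ℕ} {μ : Measure (E n)}

lemma sum_sq_eq_norm_sq (x : E n) : ∑ i, x i ^ 2 = ‖x‖ ^ 2 := by
  rw [EuclideanSpace.norm_eq, Real.sq_sqrt (by positivity)]
  exact Finset.sum_congr rfl fun i _ => by rw [Real.norm_eq_abs, sq_abs]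

lemma ae_norm_one (hμ : IsSphereMeasure n μ) : ∀ᵐ x ∂μ, ‖x‖ = 1 := by
  have h : ∀ᵐ x ∂μ, x ∈ Metric.sphere (0 : E n) 1 :=
    MeasureTheory.mem_ae_iff.mpr hμ.supp
  filter_upwards [h] with x hx
  rwa [mem_sphere_zero_iff_norm] at hx

lemma ae_sum_sq (hμ : IsSphereMeasure n μ) : ∀ᵐ x ∂μ, ∑ i, x i ^ 2 = 1 := by
  filter_upwards [ae_norm_one hμ] with x hx
  rw [sum_sq_eq_norm_sq, hx, one_pow]

lemma ae_abs_le (hμ : IsSphereMeasure n μ) : ∀ᵐ x ∂μ, ∀ i, |x i| ≤ 1 := by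
  filter_upwards [ae_sum_sq hμ] with x hx i
  have h1 : x i ^ 2 ≤ 1 := by
    rw [← hx]
    exact Finset.single_le_sum (fun j _ => sq_nonneg (x j)) (Finset.mem_univ i)
  nlinarith [abs_nonneg (x i), sq_abs (x i)]

lemma integrable_monfun (hμ : IsSphereMeasure n μ) (k : Fin n → ℕ) :
    Integrable (fun x : E n => ∏ i, x i ^ k i) μ := by
  haveI := hμ.prob
  have hc : Continuous fun x : E n => ∏ i, x i ^ k i := by
    apply continuous_finset_prod
    intro i _
    exact (by fun_prop : Continuous fun x : E n => x i).pow _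
  refine MeasureTheory.Integrable.mono' (MeasureTheory.integrable_const (1 : ℝ))
    hc.aestronglyMeasurable ?_
  filter_upwards [ae_abs_le hμ] with x hx
  rw [Real.norm_eq_abs, Finset.abs_prod]
  refine Finset.prod_le_one (fun i _ => abs_nonneg _) fun i _ => ?_
  rw [abs_pow]
  exact pow_le_one₀ (abs_nonneg _) (hx i)

lemma inner_pow_integral_invariant (hμ : IsSphereMeasure n μ) (s : ℕ) {u w : E n}
    (huw : ‖u‖ = ‖w‖) : ∫ x, ⟪u, x⟫ ^ s ∂μ = ∫ x, ⟪w, x⟫ ^ s ∂μ := by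
  have hR : (Submodule.reflection (ℝ ∙ (u - w))ᗮ) u = w := Submodule.reflection_sub huw
  calc ∫ x, ⟪u, x⟫ ^ s ∂μ
      = ∫ x, ⟪(Submodule.reflection (ℝ ∙ (u - w))ᗮ) u, (Submodule.reflection (ℝ ∙ (u - w))ᗮ) x⟫ ^ s ∂μ := by
        simp_rw [LinearIsometryEquiv.inner_map_map]
    _ = ∫ x, ⟪(Submodule.reflection (ℝ ∙ (u - w))ᗮ) u, x⟫ ^ s ∂μ := by
        conv_rhs => rw [← hμ.inv (Submodule.reflection (ℝ ∙ (u - w))ᗮ)]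
        rw [show Measure.map (⇑(Submodule.reflection (ℝ ∙ (u - w))ᗮ)) μ =
            Measure.map ((Submodule.reflection (ℝ ∙ (u - w))ᗮ).toHomeomorph.toMeasurableEquiv) μ from rfl]
        rw [MeasureTheory.integral_map_equiv]
        rfl
    _ = ∫ x, ⟪w, x⟫ ^ s ∂μ := by rw [hR]

lemma rsq_isHomog : (rsq n).IsHomogeneous 2 := by
  rw [rsq]
  exact MvPolynomial.IsHomogeneous.sum Finset.univ _ 2 fun i _ =>
    MvPolynomial.isHomogeneous_X_pow i 2

lemma inner_eq_sum (u x : E n) : ⟪u, x⟫ = ∑ i, u i * x i := by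
  simp [PiLp.inner_apply, RCLike.inner_apply, conj_trivial]
  exact Finset.sum_congr rfl fun _ _ => mul_comm _ _

lemma integrable_inner_pow (hμ : IsSphereMeasure n μ) (u : E n) (s : ℕ) :
    Integrable (fun x : E n => ⟪u, x⟫ ^ s) μ := by
  haveI := hμ.prob
  have hc : Continuous fun x : E n => ⟪u, x⟫ ^ s :=
    (Continuous.inner continuous_const continuous_id).pow _
  refine MeasureTheory.Integrable.mono' (MeasureTheory.integrable_const (‖u‖ ^ s))
    hc.aestronglyMeasurable ?_
  filter_upwards [ae_norm_one hμ] with x hx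
  rw [Real.norm_eq_abs, abs_pow]
  refine pow_le_pow_left₀ (abs_nonneg _) ?_ s
  calc |⟪u, x⟫| ≤ ‖u‖ * ‖x‖ := abs_real_inner_le_norm u x
    _ = ‖u‖ := by rw [hx, mul_one]

lemma integral_peval_homog (hn : 0 < n) (hμ : IsSphereMeasure n μ) (s : ℕ) :
    ∃ c : ℝ, ∀ h : Poly n, h.IsHomogeneous (2 * s) →
      ∫ x, peval n h x ∂μ = c * Dp ((rsq n) ^ s) h := by
  haveI := hμ.prob
  classical
  set e₁ : E n := EuclideanSpace.single ⟨0, hn⟩ 1 with he₁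
  set c₁ : ℝ := ∫ x, ⟪e₁, x⟫ ^ (2 * s) ∂μ with hc₁
  set Mo : (Fin n → ℕ) → ℝ := fun k => ∫ x, ∏ i, x i ^ k i ∂μ with hMo
  set Q : Poly n := ∑ k ∈ Finset.piAntidiag Finset.univ (2 * s),
      ((Nat.multinomial Finset.univ k : ℝ) * Mo k) •
        (monomial (Finsupp.equivFunOnFinite.symm k) (1 : ℝ)) with hQ
  have heval : ∀ u : E n, eval (fun i => u i) Q = ∫ x, ⟪u, x⟫ ^ (2 * s) ∂μ := by
    intro u
    have expand : ∀ x : E n, ⟪u, x⟫ ^ (2 * s) =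
        ∑ k ∈ Finset.piAntidiag Finset.univ (2 * s),
          (Nat.multinomial Finset.univ k : ℝ) * (∏ i, u i ^ k i) * (∏ i, x i ^ k i) := by
      intro x
      rw [inner_eq_sum, Finset.sum_pow_eq_sum_piAntidiag]
      refine Finset.sum_congr rfl fun k _ => ?_
      rw [Finset.prod_congr rfl fun (i : Fin n) _ => mul_pow (u i) (x i) (k i),
        Finset.prod_mul_distrib, mul_assoc]
    have hrhs : ∫ x, ⟪u, x⟫ ^ (2 * s) ∂μ =
        ∑ k ∈ Finset.piAntidiag Finset.univ (2 * s),
          (Nat.multinomial Finset.univ k : ℝ) * (∏ i, u i ^ k i) * Mo k := by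
      simp_rw [expand]
      rw [MeasureTheory.integral_finset_sum]
      · exact Finset.sum_congr rfl fun k _ => MeasureTheory.integral_const_mul _ _
      · intro k _
        exact (integrable_monfun hμ k).const_mul _
    rw [hrhs, hQ, map_sum]
    refine Finset.sum_congr rfl fun k _ => ?_
    rw [MvPolynomial.smul_eq_C_mul, map_mul, MvPolynomial.eval_C, MvPolynomial.eval_monomial,
      Finsupp.prod_fintype _ _ (fun i => pow_zero _)]
    simp only [Finsupp.coe_equivFunOnFinite_symm]
    ring
  have hc : ∀ u : E n, (∫ x, ⟪u, x⟫ ^ (2 * s) ∂μ) = c₁ * ((∑ i, u i ^ 2) ^ s) := by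
    intro u
    rcases Nat.eq_zero_or_pos s with hs | hs
    · subst hs
      simp only [Nat.mul_zero, pow_zero, hc₁]
      rw [MeasureTheory.integral_const]
      simp [measure_univ]
    · by_cases hu : u = 0
      · subst hu
        have h20 : 2 * s ≠ 0 := by omega
        have hz : ∀ x : E n, ⟪(0 : E n), x⟫ ^ (2 * s) = (0 : ℝ) := fun x => by
          rw [inner_zero_left, zero_pow h20]
        simp_rw [hz]
        rw [MeasureTheory.integral_zero]
        have hzz : ∑ i : Fin n, (0 : E n) i ^ 2 = 0 :=
          Finset.sum_eq_zero fun i _ => by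
            rw [show (0 : E n) i = 0 from rfl, zero_pow (by norm_num : (2:ℕ) ≠ 0)]
        rw [hzz, zero_pow (Nat.pos_iff_ne_zero.mp hs), mul_zero]
      · have hnu : ‖u‖ ≠ 0 := norm_ne_zero_iff.mpr hu
        have hv : ‖(‖u‖⁻¹ • u : E n)‖ = 1 := by
          rw [norm_smul, norm_inv, norm_norm, inv_mul_cancel₀ hnu]
        have he₁n : ‖e₁‖ = 1 := by
          rw [he₁, EuclideanSpace.norm_single, norm_one]
        have h1 : ∫ x, ⟪(‖u‖⁻¹ • u : E n), x⟫ ^ (2 * s) ∂μ = c₁ := by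
          rw [hc₁]
          exact inner_pow_integral_invariant hμ (2 * s) (by rw [hv, he₁n])
        have h2 : ∀ x : E n, ⟪u, x⟫ = ‖u‖ * ⟪(‖u‖⁻¹ • u : E n), x⟫ := by
          intro x
          rw [real_inner_smul_left, ← mul_assoc, mul_inv_cancel₀ hnu, one_mul]
        calc ∫ x, ⟪u, x⟫ ^ (2 * s) ∂μ
            = ∫ x, ‖u‖ ^ (2 * s) * ⟪(‖u‖⁻¹ • u : E n), x⟫ ^ (2 * s) ∂μ := by
              simp_rw [h2, mul_pow]
          _ = ‖u‖ ^ (2 * s) * c₁ := by rw [MeasureTheory.integral_const_mul, h1]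
          _ = c₁ * ((∑ i, u i ^ 2) ^ s) := by
              rw [sum_sq_eq_norm_sq, ← pow_mul]
              ring
  have hQrsq : Q = c₁ • ((rsq n) ^ s) := by
    apply MvPolynomial.funext
    intro v
    have hv := hc (WithLp.toLp 2 v)
    change eval (fun i => (WithLp.toLp 2 v : E n) i) Q = _
    rw [heval (WithLp.toLp 2 v), hv, MvPolynomial.smul_eq_C_mul, map_mul, MvPolynomial.eval_C]
    congr 1
    rw [map_pow]
    congr 1
    rw [rsq, map_sum]
    exact Finset.sum_congr rfl fun i _ => by rw [map_pow, MvPolynomial.eval_X]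
  refine ⟨c₁ / (((2 * s).factorial : ℝ)), ?_⟩
  intro h hh
  have hint : ∫ x, peval n h x ∂μ = ∑ γ ∈ h.support, h.coeff γ * Mo (fun i => γ i) := by
    have hexp : ∀ x : E n, peval n h x = ∑ γ ∈ h.support, h.coeff γ * ∏ i, x i ^ γ i := by
      intro x
      rw [peval, MvPolynomial.eval_eq']
    simp_rw [hexp]
    rw [MeasureTheory.integral_finset_sum]
    · exact Finset.sum_congr rfl fun γ _ => MeasureTheory.integral_const_mul _ _
    · intro γ _
      exact (integrable_monfun hμ _).const_mul _
  have hmom : ∀ γ ∈ h.support,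
      Mo (fun i => γ i) = c₁ * ((rsq n) ^ s).coeff γ * Nfac γ / (((2 * s).factorial : ℝ)) := by
    intro γ hγ
    have hdeg : ∑ i, γ i = 2 * s := isHomog_iff.mp hh γ (MvPolynomial.mem_support_iff.mp hγ)
    have hmem : (fun i => γ i) ∈ Finset.piAntidiag Finset.univ (2 * s) := by
      rw [Finset.mem_piAntidiag]
      exact ⟨hdeg, fun i _ => Finset.mem_univ i⟩
    have hcoeffQ : Q.coeff γ =
        (Nat.multinomial Finset.univ (fun i => γ i) : ℝ) * Mo (fun i => γ i) := by
      rw [hQ, MvPolynomial.coeff_sum]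
      rw [Finset.sum_eq_single_of_mem (fun i => γ i) hmem]
      · rw [MvPolynomial.coeff_smul, Finsupp.equivFunOnFinite_symm_coe,
          MvPolynomial.coeff_monomial, if_pos rfl, smul_eq_mul, mul_one]
      · intro k _ hk
        rw [MvPolynomial.coeff_smul, MvPolynomial.coeff_monomial, if_neg, smul_zero]
        intro hkk
        apply hk
        rw [Equiv.symm_apply_eq] at hkk
        rw [hkk]
        rfl
    have hcoeffQ' : Q.coeff γ = c₁ * ((rsq n) ^ s).coeff γ := by
      rw [hQrsq, MvPolynomial.coeff_smul, smul_eq_mul]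
    have hspec : Nfac γ * (Nat.multinomial Finset.univ (fun i => γ i) : ℝ) =
        (((2 * s).factorial : ℝ)) := by
      have hs2 := Nat.multinomial_spec Finset.univ (fun i => γ i)
      rw [hdeg] at hs2
      rw [Nfac, ← Nat.cast_prod, ← Nat.cast_mul, hs2]
    have hmultpos : (0 : ℝ) < (Nat.multinomial Finset.univ (fun i => γ i) : ℝ) := by
      exact_mod_cast Nat.multinomial_pos _ _
    have hfacpos : (0 : ℝ) < (((2 * s).factorial : ℝ)) := by
      exact_mod_cast Nat.factorial_pos _
    have hMoval : Mo (fun i => γ i) =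
        c₁ * ((rsq n) ^ s).coeff γ / (Nat.multinomial Finset.univ (fun i => γ i) : ℝ) := by
      rw [← hcoeffQ', hcoeffQ]
      field_simp
    have hNpos : (0 : ℝ) < Nfac γ :=
      Finset.prod_pos fun i _ => Nat.cast_pos.mpr (Nat.factorial_pos _)
    rw [hMoval, ← hspec]
    field_simp
  rw [hint, Dp_symm]
  unfold Dp
  rw [Finset.mul_sum]
  refine Finset.sum_congr rfl fun γ hγ => ?_
  rw [hmom γ hγ]
  ring

end MeasureAux

/-- for harmonic homogeneous polynomials `f, g` of degree `2m`, the
spherical integral of `f·g` equals `(∏_{k=0}^{2m-1}(n+2k))⁻¹ ⟨f,g⟩`. -/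
theorem statement4 (n m : ℕ) (hn : 0 < n)
    (μ : Measure (E n)) (hμ : IsSphereMeasure n μ)
    (f g : Poly n) (hf : f ∈ Harm n (2 * m)) (hg : g ∈ Harm n (2 * m)) :
    ∫ x, peval n f x * peval n g x ∂μ =
      (∏ k ∈ Finset.range (2 * m), ((n : ℝ) + 2 * (k : ℝ)))⁻¹ * dPair n f g := by
  classical
  haveI := hμ.prob
  -- extract homogeneity and harmonicity
  have hlap : ∀ p : Poly n, p ∈ LinearMap.ker (lap n) →
      ∑ i, pderiv i (pderiv i p) = 0 := by
    intro p hp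
    rw [LinearMap.mem_ker] at hp
    rw [lap] at hp
    simp only [LinearMap.neg_apply, LinearMap.coe_sum, Finset.sum_apply,
      LinearMap.comp_apply, Derivation.coeFn_coe, neg_eq_zero] at hp
    exact hp
  obtain ⟨hf1, hf2⟩ := Submodule.mem_inf.mp hf
  obtain ⟨hg1, hg2⟩ := Submodule.mem_inf.mp hg
  rw [MvPolynomial.mem_homogeneousSubmodule] at hf1 hg1
  have hlf := hlap f hf2
  have hlg := hlap g hg2
  -- the product is homogeneous of degree 2 * (2 * m)
  have hfg : (f * g).IsHomogeneous (2 * (2 * m)) := by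
    have := hf1.mul hg1
    have heq : 2 * m + 2 * m = 2 * (2 * m) := by ring
    rwa [heq] at this
  obtain ⟨c, hc⟩ := integral_peval_homog hn hμ (2 * m)
  -- compute the normalizing constant via rsq ^ (2 * m)
  have hrsqpow : ((rsq n) ^ (2 * m)).IsHomogeneous (2 * (2 * m)) := rsq_isHomog.pow (2 * m)
  have hone : ∫ x, peval n ((rsq n) ^ (2 * m)) x ∂μ = 1 := by
    have hae : ∀ᵐ x ∂μ, peval n ((rsq n) ^ (2 * m)) x = 1 := by
      filter_upwards [ae_sum_sq hμ] with x hx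
      rw [peval, map_pow]
      have : eval (fun i => x i) (rsq n) = ∑ i, x i ^ 2 := by
        rw [rsq, map_sum]
        exact Finset.sum_congr rfl fun i _ => by rw [map_pow, MvPolynomial.eval_X]
      rw [this, hx, one_pow]
    rw [MeasureTheory.integral_congr_ae hae, MeasureTheory.integral_const]
    simp [measure_univ]
  have hDss := Dp_rsq_pow (n := n) (2 * m)
  set P : ℝ := ∏ k ∈ Finset.range (2 * m), ((n : ℝ) + 2 * (k : ℝ)) with hP
  have hPpos : 0 < P := by
    refine Finset.prod_pos fun k _ => ?_
    have hn' : (1 : ℝ) ≤ (n : ℝ) := by exact_mod_cast hn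
    have : (0 : ℝ) ≤ 2 * (k : ℝ) := by positivity
    linarith
  have hfac : (0 : ℝ) < ((2 * m).factorial : ℝ) := by exact_mod_cast Nat.factorial_pos _
  have h2pow : (0 : ℝ) < (2 : ℝ) ^ (2 * m) := by positivity
  have hcval : c * (2 ^ (2 * m) * (((2 * m).factorial : ℝ)) * P) = 1 := by
    rw [← hDss, ← hc _ hrsqpow, hone]
  -- main computation
  have hmul : ∀ x : E n, peval n f x * peval n g x = peval n (f * g) x := by
    intro x
    rw [peval, peval, peval, map_mul]
  simp_rw [hmul]
  rw [hc _ hfg, hecke (2 * m) f g hf1 hg1 hlf hlg, dPair_eq_Dp]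
  have hAne : (2 : ℝ) ^ (2 * m) * (((2 * m).factorial : ℝ)) * P ≠ 0 := by positivity
  have hcv : c = ((2 : ℝ) ^ (2 * m) * (((2 * m).factorial : ℝ)) * P)⁻¹ :=
    eq_inv_of_mul_eq_one_left (by linarith [hcval])
  rw [hcv]
  rw [mul_inv, mul_inv]
  field_simp

end Heat
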